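/- For every G_δ subset R of 2^ω and every family 𝒲 of fewer than 𝔟 many compact subsets of R, there exists a σ-compact subset K of R containing ∪𝒲. -/

import Mathlib

open Set Filter Topology

/-- The bounding number `𝔟`. -/
noncomputable def bCardinal : Cardinal :=
  sInf { c : Cardinal |
    ∃ F : Set (ℕ → ℕ), Cardinal.mk F = c ∧
      ∀ g : ℕ → ℕ, ∃ f ∈ F, ¬ ∀ᶠ n in Filter.atTop, f n ≤ g n }

/-- Cylinder of length `m` around `x`. -/
def myCyl (x : ℕ → Bool) (m : ℕ) : Set (ℕ → Bool) := {y | ∀ i < m, y i = x i}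

lemma mem_myCyl_self (x : ℕ → Bool) (m : ℕ) : x ∈ myCyl x m := fun _ _ => rfl

lemma isOpen_myCyl (x : ℕ → Bool) (m : ℕ) : IsOpen (myCyl x m) := by
  have : myCyl x m = ⋂ i ∈ Finset.range m, (fun y : ℕ → Bool => y i) ⁻¹' {x i} := by
    ext y; simp [myCyl]
  rw [this]
  exact isOpen_biInter_finset fun i _ => (continuous_apply i).isOpen_preimage _ (isOpen_discrete _)

lemma myCyl_eq_of_mem {x x' : ℕ → Bool} {m : ℕ} (h : x' ∈ myCyl x m) :
    myCyl x' m = myCyl x m := by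
  ext y
  constructor <;> intro hy i hi
  · rw [hy i hi, h i hi]
  · rw [hy i hi, h i hi]

lemma myCyl_mono (x : ℕ → Bool) {m m' : ℕ} (h : m ≤ m') : myCyl x m' ⊆ myCyl x m :=
  fun _ hy i hi => hy i (lt_of_lt_of_le hi h)

/-- Modulus of a compact set inside an open set. -/
lemma exists_modulus {K U : Set (ℕ → Bool)} (hK : IsCompact K) (hU : IsOpen U)
    (hKU : K ⊆ U) : ∃ m : ℕ, ∀ x ∈ K, myCyl x m ⊆ U := by
  have hbasis : ∀ x ∈ K, ∃ m : ℕ, myCyl x m ⊆ U := by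
    intro x hx
    obtain ⟨I, u, hI, hsub⟩ := isOpen_pi_iff.mp hU x (hKU hx)
    rcases I.bddAbove with ⟨M, hM⟩
    refine ⟨M + 1, fun y hy => hsub ?_⟩
    intro i hi
    have : y i = x i := hy i (Nat.lt_succ_of_le (hM hi))
    rw [this]; exact (hI i hi).2
  choose! m hm using hbasis
  obtain ⟨t, htK, htfin, hcov⟩ :=
    hK.elim_finite_subcover_image (fun x _ => isOpen_myCyl x (m x))
      (fun x hx => mem_biUnion hx (mem_myCyl_self x (m x)))
  set M := htfin.toFinset.sup m with hM
  refine ⟨M, fun x hx y hy => ?_⟩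
  obtain ⟨z, hz, hxz⟩ := mem_iUnion₂.mp (hcov hx)
  have hmz : m z ≤ M := Finset.le_sup (htfin.mem_toFinset.mpr hz)
  have : y ∈ myCyl z (m z) := by
    intro i hi
    rw [hy i (lt_of_lt_of_le hi hmz), hxz i hi]
  exact hm z (htK hz) this

/-- The compact "trace" set. -/
def Cset (U : ℕ → Set (ℕ → Bool)) (h : ℕ → ℕ) : Set (ℕ → Bool) :=
  {x | ∀ n, myCyl x (h n) ⊆ U n}

lemma isClosed_Cset (U : ℕ → Set (ℕ → Bool)) (h : ℕ → ℕ) : IsClosed (Cset U h) := by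
  have : Cset U h = ⋂ n, {x | myCyl x (h n) ⊆ U n} := by ext x; simp [Cset]
  rw [this]
  refine isClosed_iInter fun n => ?_
  rw [← isOpen_compl_iff, isOpen_iff_mem_nhds]
  intro x hx
  refine Filter.mem_of_superset ((isOpen_myCyl x (h n)).mem_nhds (mem_myCyl_self _ _)) ?_
  exact fun x' hx' hx'sub => hx (fun y hy => hx'sub (by rwa [myCyl_eq_of_mem hx']))

lemma isCompact_Cset (U : ℕ → Set (ℕ → Bool)) (h : ℕ → ℕ) : IsCompact (Cset U h) :=
  (isClosed_Cset U h).isCompact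

lemma Cset_subset (U : ℕ → Set (ℕ → Bool)) (h : ℕ → ℕ) : Cset U h ⊆ ⋂ n, U n := by
  intro x hx
  exact mem_iInter.mpr fun n => hx n (mem_myCyl_self _ _)

theorem sigmaCompact_absorbs_small_families_of_compacts
    (R : Set (ℕ → Bool)) (hR : IsGδ R)
    (W : Set (Set (ℕ → Bool))) (hWsmall : Cardinal.mk W < bCardinal)
    (hWcomp : ∀ K ∈ W, IsCompact K ∧ K ⊆ R) :
    ∃ K : Set (ℕ → Bool), IsSigmaCompact K ∧ K ⊆ R ∧ ⋃₀ W ⊆ K := by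
  obtain ⟨U, hUopen, rfl⟩ := hR.eq_iInter_nat
  -- moduli
  have hmod : ∀ C : W, ∃ f : ℕ → ℕ, ∀ n, ∀ x ∈ (C : Set (ℕ → Bool)), myCyl x (f n) ⊆ U n := by
    rintro ⟨C, hC⟩
    have h1 := (hWcomp C hC).1
    have h2 := (hWcomp C hC).2
    have : ∀ n, ∃ m : ℕ, ∀ x ∈ C, myCyl x m ⊆ U n := fun n =>
      exists_modulus h1 (hUopen n) (h2.trans (iInter_subset U n))
    choose f hf using this
    exact ⟨f, hf⟩
  choose f hf using hmod
  -- bound the moduli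
  have hbound : ∃ g : ℕ → ℕ, ∀ C : W, ∀ᶠ n in Filter.atTop, f C n ≤ g n := by
    by_contra hcon
    push_neg at hcon
    have hmem : Cardinal.mk (Set.range f) ∈ { c : Cardinal |
        ∃ F : Set (ℕ → ℕ), Cardinal.mk F = c ∧
          ∀ g : ℕ → ℕ, ∃ h ∈ F, ¬ ∀ᶠ n in Filter.atTop, h n ≤ g n } := by
      refine ⟨Set.range f, rfl, fun g => ?_⟩
      obtain ⟨C, hC⟩ := hcon g
      exact ⟨f C, mem_range_self C, fun h => (hC.and_eventually h).exists.elim fun n hn => absurd hn.2 (not_le.mpr hn.1)⟩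
    have h1 : bCardinal ≤ Cardinal.mk (Set.range f) := (csInf_le' hmem : bCardinal ≤ _)
    have h2 : Cardinal.mk (Set.range f) ≤ Cardinal.mk W := Cardinal.mk_range_le
    exact absurd ((h1.trans h2)) (not_le.mpr hWsmall)
  obtain ⟨g, hg⟩ := hbound
  -- σ-compact set
  let e : ℕ → List ℕ := fun n => Denumerable.ofNat (List ℕ) n
  let hfun : List ℕ → ℕ → ℕ := fun s n => max (g n) (s.getD n 0)
  refine ⟨⋃ n, Cset U (hfun (e n)), ⟨_, fun n => isCompact_Cset _ _, rfl⟩, ?_, ?_⟩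
  · exact iUnion_subset fun n => Cset_subset _ _
  · rintro x ⟨C, hC, hx⟩
    obtain ⟨m, hm⟩ := eventually_atTop.mp (hg ⟨C, hC⟩)
    set s : List ℕ := (List.range m).map (f ⟨C, hC⟩) with hs
    refine mem_iUnion.mpr ⟨Encodable.encode s, ?_⟩
    have hes : e (Encodable.encode s) = s := Denumerable.ofNat_encode s
    rw [hes]
    intro n
    have hfl : f ⟨C, hC⟩ n ≤ hfun s n := by
      rcases lt_or_ge n m with hn | hn
      · have : s.getD n 0 = f ⟨C, hC⟩ n := by
          simp [hs, List.getD_eq_getElem?_getD, hn]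
        simp only [hfun]; omega
      · exact le_max_of_le_left (hm n hn)
    exact (myCyl_mono x hfl).trans (hf ⟨C, hC⟩ n x hx)
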